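/- arXiv:1109.2946 — 3 statements merged into one kernel-verified Lean document; each statement's English description precedes it below -/
import Mathlib

section
/- Separation from all but the nearest m-th root rotation: let m ≥ 2 be an integerse, and a, b ∈ ℂ. For j = 0, 1, …, m − 1 set w_j = e^{2πij/m}·b, and let j₀ be an index minimizing |a − w_j| over j ∈ {0, …, m − 1}. Then for every j ∈ {0, …, m − 1} with j ≠ j₀ one has |a − w_j| ≥ |a|·sin(π/m) ≥ (2/m)·|a|. -/
open Real Complex

lemma unique_close_aux (m : ℕ) (hm : 2 ≤ m) (ψ : ℝ) (j k : ℕ) (hj : j < m) (hk : k < m)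
    (hcj : Real.cos (Real.pi / m) < Real.cos (ψ - 2 * Real.pi * j / m))
    (hck : Real.cos (Real.pi / m) < Real.cos (ψ - 2 * Real.pi * k / m)) : j = k := by
  have hm0 : (0:ℝ) < m := by positivity
  have hpi := Real.pi_pos
  have hp : (0:ℝ) < 2 * Real.pi := by linarith
  set xj := toIocMod hp (-Real.pi) (ψ - 2 * Real.pi * j / m) with hxjdef
  set xk := toIocMod hp (-Real.pi) (ψ - 2 * Real.pi * k / m) with hxkdef
  have hmemj := toIocMod_mem_Ioc hp (-Real.pi) (ψ - 2 * Real.pi * j / m)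
  have hmemk := toIocMod_mem_Ioc hp (-Real.pi) (ψ - 2 * Real.pi * k / m)
  have hsubj := self_sub_toIocMod hp (-Real.pi) (ψ - 2 * Real.pi * j / m)
  have hsubk := self_sub_toIocMod hp (-Real.pi) (ψ - 2 * Real.pi * k / m)
  set nj : ℤ := toIocDiv hp (-Real.pi) (ψ - 2 * Real.pi * j / m) with hnj
  set nk : ℤ := toIocDiv hp (-Real.pi) (ψ - 2 * Real.pi * k / m) with hnk
  rw [zsmul_eq_mul] at hsubj hsubk
  -- cos xj = cos (ψ - 2πj/m)
  have hcosj : Real.cos xj = Real.cos (ψ - 2 * Real.pi * j / m) := by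
    have : xj = (ψ - 2 * Real.pi * j / m) - nj * (2 * Real.pi) := by linarith
    rw [this, Real.cos_sub_int_mul_two_pi]
  have hcosk : Real.cos xk = Real.cos (ψ - 2 * Real.pi * k / m) := by
    have : xk = (ψ - 2 * Real.pi * k / m) - nk * (2 * Real.pi) := by linarith
    rw [this, Real.cos_sub_int_mul_two_pi]
  -- |xj| < π/m, |xk| < π/m
  have habs : ∀ x : ℝ, x ∈ Set.Ioc (-Real.pi) (-Real.pi + 2 * Real.pi) →
      Real.cos (Real.pi / m) < Real.cos x → |x| < Real.pi / m := by
    intro x hmem hc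
    by_contra h
    push_neg at h
    have hxle : |x| ≤ Real.pi := by
      rw [abs_le]; constructor <;> [linarith [hmem.1]; linarith [hmem.2]]
    have h1 : Real.cos |x| ≤ Real.cos (Real.pi / m) :=
      Real.cos_le_cos_of_nonneg_of_le_pi (by positivity) hxle h
    rw [Real.cos_abs] at h1
    linarith
  have hxj : |xj| < Real.pi / m := habs _ hmemj (by rw [hcosj]; exact hcj)
  have hxk : |xk| < Real.pi / m := habs _ hmemk (by rw [hcosk]; exact hck)
  -- xj - xk = (2π/m) * ((k - j) + m*(nk - nj))
  have key : xj - xk = (2 * Real.pi / m) * (((k:ℤ) - (j:ℤ) + (m:ℤ) * (nk - nj) : ℤ) : ℝ) := by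
    have hxj' : xj = ψ - 2 * Real.pi * j / m - nj * (2 * Real.pi) := by linarith
    have hxk' : xk = ψ - 2 * Real.pi * k / m - nk * (2 * Real.pi) := by linarith
    rw [hxj', hxk']
    push_cast
    field_simp
    ring
  have hlt : |xj - xk| < 2 * Real.pi / m := by
    calc |xj - xk| ≤ |xj| + |xk| := abs_sub _ _
      _ < Real.pi / m + Real.pi / m := by linarith
      _ = 2 * Real.pi / m := by ring
  rw [key, abs_mul, abs_of_pos (by positivity : (0:ℝ) < 2 * Real.pi / m)] at hlt
  have hpos : (0:ℝ) < 2 * Real.pi / m := by positivity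
  have h1 : |(((k:ℤ) - (j:ℤ) + (m:ℤ) * (nk - nj) : ℤ) : ℝ)| < 1 :=
    (mul_lt_mul_iff_right₀ hpos).mp (by rw [mul_one]; exact hlt)
  rw [← Int.cast_abs] at h1
  have h2 : |(k:ℤ) - (j:ℤ) + (m:ℤ) * (nk - nj)| < 1 := by exact_mod_cast h1
  have h3 : (k:ℤ) - (j:ℤ) + (m:ℤ) * (nk - nj) = 0 := Int.abs_lt_one_iff.mp h2
  -- so m divides k - j
  have h4 : (k:ℤ) - (j:ℤ) = (m:ℤ) * (nj - nk) := by linear_combination h3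
  have hjm : (j:ℤ) < m := by exact_mod_cast hj
  have hkm : (k:ℤ) < m := by exact_mod_cast hk
  have hj0 : (0:ℤ) ≤ j := Int.ofNat_nonneg j
  have hk0 : (0:ℤ) ≤ k := Int.ofNat_nonneg k
  have h6 : nj - nk = 0 := by
    rcases lt_trichotomy (nj - nk) 0 with h | h | h
    · have h7 : nj - nk ≤ -1 := by omega
      have h8 : (m:ℤ) * (nj - nk) ≤ (m:ℤ) * (-1) :=
        mul_le_mul_of_nonneg_left h7 (by positivity)
      linarith
    · exact h
    · have h7 : 1 ≤ nj - nk := by omega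
      have h8 : (m:ℤ) * 1 ≤ (m:ℤ) * (nj - nk) :=
        mul_le_mul_of_nonneg_left h7 (by positivity)
      linarith
  rw [h6, mul_zero] at h4
  omega

lemma arith_aux (A B s c x : ℝ) (hA : 0 ≤ A) (hB : 0 ≤ B) (hx : x ≤ c)
    (hs : s ^ 2 = 1 - c ^ 2) :
    (A * s) ^ 2 ≤ A ^ 2 + B ^ 2 - 2 * (A * B) * x := by
  nlinarith [sq_nonneg (A * c - B), mul_le_mul_of_nonneg_left hx
    (by positivity : (0:ℝ) ≤ 2 * (A * B))]

/-- Separation from all but the nearest `m`-th root rotation: for the points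
`w_j = e^{2πij/m} b`, `j = 0, …, m-1`, if `j₀` minimizes `|a - w_j|`, then every
other `w_j` satisfies `|a - w_j| ≥ |a| sin(π/m) ≥ (2/m) |a|`. -/
theorem mth_root_rotation_separation (m : ℕ) (hm : 2 ≤ m) (a b : ℂ)
    (j₀ : ℕ) (hj₀ : j₀ < m)
    (hmin : ∀ j < m,
      ‖a - Complex.exp (2 * Real.pi * Complex.I * j₀ / m) * b‖ ≤
        ‖a - Complex.exp (2 * Real.pi * Complex.I * j / m) * b‖) :
    ∀ j < m, j ≠ j₀ →
      ‖a‖ * Real.sin (Real.pi / m) ≤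
          ‖a - Complex.exp (2 * Real.pi * Complex.I * j / m) * b‖ ∧
      (2 / (m : ℝ)) * ‖a‖ ≤ ‖a‖ * Real.sin (Real.pi / m) := by
  have hm0 : (0:ℝ) < m := by positivity
  have hpi := Real.pi_pos
  have hsin2 : 2 / (m:ℝ) ≤ Real.sin (Real.pi / m) := by
    have h1 : Real.pi / m ≤ Real.pi / 2 := by
      apply div_le_div_of_nonneg_left (le_of_lt hpi) (by norm_num) (by exact_mod_cast hm)
    have h2 := Real.mul_le_sin (x := Real.pi / m) (by positivity) h1
    have : 2 / Real.pi * (Real.pi / m) = 2 / m := by field_simp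
    linarith [h2, this.symm.le]
  have hm1 : (1:ℝ) ≤ m := by exact_mod_cast Nat.one_le_of_lt hm
  have hsinnn : 0 ≤ Real.sin (Real.pi / m) :=
    Real.sin_nonneg_of_nonneg_of_le_pi (by positivity) (div_le_self hpi.le hm1)
  have hsin1 : Real.sin (Real.pi / m) ≤ 1 := Real.sin_le_one _
  intro j hj hne
  refine ⟨?_, by nlinarith [norm_nonneg a]⟩
  by_cases ha : a = 0
  · simp [ha]
  by_cases hb : b = 0
  · simpa [hb] using mul_le_of_le_one_right (norm_nonneg a) hsin1
  -- main case
  set u := a * (starRingEnd ℂ) b with hu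
  set ψ := u.arg with hψ
  have hA : 0 < ‖a‖ := norm_pos_iff.mpr ha
  have hB : 0 < ‖b‖ := norm_pos_iff.mpr hb
  have habsu : ‖u‖ = ‖a‖ * ‖b‖ := by
    rw [hu, norm_mul, Complex.norm_conj]
  -- distance formula
  have key : ∀ n : ℕ, ‖a - Complex.exp (2 * Real.pi * Complex.I * n / m) * b‖ ^ 2
      = ‖a‖ ^ 2 + ‖b‖ ^ 2 -
        2 * (‖a‖ * ‖b‖) * Real.cos (ψ - 2 * Real.pi * n / m) := by
    intro n
    have hexp : Complex.exp (2 * Real.pi * Complex.I * n / m)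
        = Complex.exp (((2 * Real.pi * n / m : ℝ) : ℂ) * Complex.I) := by
      congr 1
      push_cast
      ring
    rw [hexp, Complex.sq_norm, Complex.normSq_sub]
    have h1 : Complex.normSq (Complex.exp (((2 * Real.pi * n / m : ℝ) : ℂ) * Complex.I) * b)
        = Complex.normSq b := by
      rw [Complex.normSq_mul, Complex.normSq_eq_norm_sq, Complex.norm_exp_ofReal_mul_I]
      norm_num
    have h2 : (a * (starRingEnd ℂ) (Complex.exp (((2 * Real.pi * n / m : ℝ) : ℂ) * Complex.I) * b)).re
        = ‖a‖ * ‖b‖ * Real.cos (ψ - 2 * Real.pi * n / m) := by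
      have hconj : (starRingEnd ℂ) (Complex.exp (((2 * Real.pi * n / m : ℝ) : ℂ) * Complex.I))
          = Complex.exp (((-(2 * Real.pi * n / m) : ℝ) : ℂ) * Complex.I) := by
        rw [← Complex.exp_conj]
        congr 1
        simp only [map_mul, Complex.conj_ofReal, Complex.conj_I]
        push_cast
        ring
      have hu2 : a * (starRingEnd ℂ) (Complex.exp (((2 * Real.pi * n / m : ℝ) : ℂ) * Complex.I) * b)
          = u * Complex.exp (((-(2 * Real.pi * n / m) : ℝ) : ℂ) * Complex.I) := by
        rw [map_mul, hconj, hu]; ring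
      rw [hu2]
      conv_lhs => rw [← Complex.norm_mul_exp_arg_mul_I u]
      rw [mul_assoc, ← Complex.exp_add, ← hψ]
      have : (↑ψ * Complex.I + ((-(2 * Real.pi * n / m) : ℝ) : ℂ) * Complex.I)
          = ((ψ - 2 * Real.pi * n / m : ℝ) : ℂ) * Complex.I := by
        push_cast; ring
      rw [this, Complex.re_ofReal_mul, Complex.exp_ofReal_mul_I_re, habsu]
    rw [h1, h2, Complex.normSq_eq_norm_sq, Complex.normSq_eq_norm_sq]
    ring
  set A := ‖a‖
  set B := ‖b‖
  have hkeyj := key j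
  have hkeyj0 := key j₀
  have hminj := hmin j hj
  have hD : 0 ≤ ‖a - Complex.exp (2 * Real.pi * Complex.I * j / m) * b‖ :=
    norm_nonneg _
  have hD0 : 0 ≤ ‖a - Complex.exp (2 * Real.pi * Complex.I * j₀ / m) * b‖ :=
    norm_nonneg _
  have hAB : 0 < A * B := mul_pos hA hB
  have hsq0 : ‖a - Complex.exp (2 * Real.pi * Complex.I * j₀ / m) * b‖ ^ 2 ≤
      ‖a - Complex.exp (2 * Real.pi * Complex.I * j / m) * b‖ ^ 2 :=
    pow_le_pow_left₀ hD0 hminj 2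
  rw [hkeyj, hkeyj0] at hsq0
  have hcle : Real.cos (ψ - 2 * Real.pi * j / m) ≤ Real.cos (ψ - 2 * Real.pi * j₀ / m) := by
    nlinarith [hsq0, hAB]
  have hcjle : Real.cos (ψ - 2 * Real.pi * j / m) ≤ Real.cos (Real.pi / m) := by
    by_contra h
    push_neg at h
    exact hne (unique_close_aux m hm ψ j j₀ hj hj₀ h (lt_of_lt_of_le h hcle))
  have hs2 : Real.sin (Real.pi / m) ^ 2 = 1 - Real.cos (Real.pi / m) ^ 2 := by
    nlinarith [Real.sin_sq_add_cos_sq (Real.pi / m)]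
  have hsq : (A * Real.sin (Real.pi / m)) ^ 2 ≤
      ‖a - Complex.exp (2 * Real.pi * Complex.I * j / m) * b‖ ^ 2 := by
    rw [hkeyj]
    exact arith_aux A B _ _ _ hA.le hB.le hcjle hs2
  exact (pow_le_pow_iff_left₀ (mul_nonneg hA.le hsinnn) hD two_ne_zero).mp hsq
end

section
/- The contraction factor of the inclusion of the punctured disk into the disk: define a(x) = 2·x·log(1/x)/(1 − x²) for x ∈ (0, 1), where log denotes the natural logarithm. Then a(x) < 1 for every x ∈ (0, 1), and a is strictly increasing on (0, 1). -/
open Real Set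

private lemma hd_xlog (x : ℝ) (hx : x ≠ 0) :
    HasDerivAt (fun x : ℝ => x * Real.log x) (Real.log x + 1) x := by
  have := (hasDerivAt_id x).fun_mul (Real.hasDerivAt_log hx)
  simpa [hx, mul_inv_cancel₀, add_comm] using this

private lemma hd_sq (x : ℝ) :
    HasDerivAt (fun x : ℝ => 1 - x ^ 2) (-(2 * x)) x := by
  simpa using ((hasDerivAt_pow 2 x).const_sub 1)

/-- `f x = 1 - x² + 2 x log x` is positive on `(0,1)`. -/
private lemma lemB : ∀ x ∈ Ioo (0 : ℝ) 1, 0 < 1 - x ^ 2 + 2 * (x * Real.log x) := by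
  set f : ℝ → ℝ := fun x => 1 - x ^ 2 + 2 * (x * Real.log x) with hf
  have hder : ∀ x : ℝ, x ≠ 0 →
      HasDerivAt f (-(2 * x) + 2 * (Real.log x + 1)) x := fun x hx =>
    (hd_sq x).add ((hd_xlog x hx).const_mul 2)
  have hanti : StrictAntiOn f (Ioc (0 : ℝ) 1) := by
    apply strictAntiOn_of_deriv_neg (convex_Ioc 0 1)
    · intro x hx
      exact (hder x (ne_of_gt hx.1)).continuousAt.continuousWithinAt
    · intro x hx
      rw [interior_Ioc] at hx
      rw [(hder x (ne_of_gt hx.1)).deriv]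
      have hlt : Real.log x < x - 1 :=
        Real.log_lt_sub_one_of_pos hx.1 (ne_of_lt hx.2)
      linarith
  intro x hx
  have h1 : f 1 < f x :=
    hanti ⟨hx.1, le_of_lt hx.2⟩ (right_mem_Ioc.mpr one_pos) hx.2
  simpa [hf] using h1

/-- `h x = 2 x log x + 1/x - x` is positive on `(0,1)`. -/
private lemma lemH : ∀ x ∈ Ioo (0 : ℝ) 1, 0 < 2 * (x * Real.log x) + x⁻¹ - x := by
  set h : ℝ → ℝ := fun x => 2 * (x * Real.log x) + x⁻¹ - x with hh
  have hder : ∀ x : ℝ, x ≠ 0 →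
      HasDerivAt h (2 * (Real.log x + 1) + (-(x ^ 2)⁻¹) - 1) x := fun x hx =>
    (((hd_xlog x hx).const_mul 2).add (hasDerivAt_inv hx)).sub (hasDerivAt_id x)
  have hanti : StrictAntiOn h (Ioc (0 : ℝ) 1) := by
    apply strictAntiOn_of_deriv_neg (convex_Ioc 0 1)
    · intro x hx
      exact (hder x (ne_of_gt hx.1)).continuousAt.continuousWithinAt
    · intro x hx
      rw [interior_Ioc] at hx
      rw [(hder x (ne_of_gt hx.1)).deriv]
      have hlog : Real.log x < 0 := Real.log_neg hx.1 hx.2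
      have hx2 : x ^ 2 < 1 := by nlinarith [hx.1, hx.2]
      have hx2pos : (0 : ℝ) < x ^ 2 := pow_pos hx.1 2
      have : (1 : ℝ) < (x ^ 2)⁻¹ := (one_lt_inv₀ hx2pos).mpr hx2
      linarith
  intro x hx
  have h1 : h 1 < h x :=
    hanti ⟨hx.1, le_of_lt hx.2⟩ (right_mem_Ioc.mpr one_pos) hx.2
  simpa [hh] using h1

/-- `g x = (1+x²) log x + 1 - x²` is negative on `(0,1)`. -/
private lemma lemA : ∀ x ∈ Ioo (0 : ℝ) 1, (1 + x ^ 2) * Real.log x + 1 - x ^ 2 < 0 := by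
  set g : ℝ → ℝ := fun x => (1 + x ^ 2) * Real.log x + 1 - x ^ 2 with hg
  have hder : ∀ x : ℝ, x ≠ 0 →
      HasDerivAt g (2 * (x * Real.log x) + x⁻¹ - x) x := by
    intro x hx
    have h1 : HasDerivAt (fun x : ℝ => (1 + x ^ 2) * Real.log x)
        (2 * x * Real.log x + (1 + x ^ 2) * x⁻¹) x := by
      have ha : HasDerivAt (fun x : ℝ => 1 + x ^ 2) (2 * x) x := by
        simpa using ((hasDerivAt_pow 2 x).const_add 1)
      simpa using ha.fun_mul (Real.hasDerivAt_log hx)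
    have h2 : HasDerivAt (fun x : ℝ => 1 - x ^ 2) (-(2 * x)) x := hd_sq x
    have : HasDerivAt (fun i => (1 + i ^ 2) * Real.log i + (1 - i ^ 2)) _ x := h1.fun_add h2
    have heq : 2 * x * Real.log x + (1 + x ^ 2) * x⁻¹ + -(2 * x)
        = 2 * (x * Real.log x) + x⁻¹ - x := by
      field_simp
      ring
    rw [heq] at this
    convert this using 2 with y
    ring
  have hmono : StrictMonoOn g (Ioc (0 : ℝ) 1) := by
    apply strictMonoOn_of_deriv_pos (convex_Ioc 0 1)
    · intro x hx
      exact (hder x (ne_of_gt hx.1)).continuousAt.continuousWithinAt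
    · intro x hx
      rw [interior_Ioc] at hx
      rw [(hder x (ne_of_gt hx.1)).deriv]
      exact lemH x hx
  intro x hx
  have h1 : g x < g 1 :=
    hmono ⟨hx.1, le_of_lt hx.2⟩ (right_mem_Ioc.mpr one_pos) hx.2
  simpa [hg] using h1

private lemma hd_main (x : ℝ) (hx : x ∈ Ioo (0 : ℝ) 1) :
    HasDerivAt (fun x : ℝ => 2 * x * Real.log (1 / x) / (1 - x ^ 2))
      ((-2 * ((1 + x ^ 2) * Real.log x + 1 - x ^ 2)) / (1 - x ^ 2) ^ 2) x := by
  have hx0 : x ≠ 0 := ne_of_gt hx.1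
  have hv : 1 - x ^ 2 ≠ 0 := by nlinarith [hx.1, hx.2]
  have hu : HasDerivAt (fun x : ℝ => -(2 * (x * Real.log x)))
      (-(2 * (Real.log x + 1))) x := ((hd_xlog x hx0).const_mul 2).neg
  have hdiv : HasDerivAt (fun y => -(2 * (y * Real.log y)) / (1 - y ^ 2)) _ x :=
    hu.fun_div (hd_sq x) hv
  have hfeq : (fun x : ℝ => 2 * x * Real.log (1 / x) / (1 - x ^ 2))
      = fun x : ℝ => -(2 * (x * Real.log x)) / (1 - x ^ 2) := by
    funext y
    rw [one_div, Real.log_inv]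
    ring
  rw [hfeq]
  convert hdiv using 1
  field_simp
  ring

/-- The contraction factor of the inclusion of the punctured disk into the disk:
`a(x) = 2 x log(1/x) / (1 - x²)` satisfies `a(x) < 1` for all `x ∈ (0, 1)` and `a` is
strictly increasing on `(0, 1)`. -/
theorem punctured_disk_inclusion_contraction :
    (∀ x ∈ Set.Ioo (0 : ℝ) 1, 2 * x * Real.log (1 / x) / (1 - x ^ 2) < 1) ∧
    StrictMonoOn (fun x : ℝ => 2 * x * Real.log (1 / x) / (1 - x ^ 2))
      (Set.Ioo (0 : ℝ) 1) := by
  constructor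
  · intro x hx
    have hv : (0 : ℝ) < 1 - x ^ 2 := by nlinarith [hx.1, hx.2]
    rw [div_lt_one hv, one_div, Real.log_inv]
    have := lemB x hx
    nlinarith
  · apply strictMonoOn_of_deriv_pos (convex_Ioo 0 1)
    · intro x hx
      exact (hd_main x hx).continuousAt.continuousWithinAt
    · intro x hx
      rw [interior_Ioo] at hx
      rw [(hd_main x hx).deriv]
      have hA := lemA x hx
      have hv : (0 : ℝ) < (1 - x ^ 2) ^ 2 := by
        have : 1 - x ^ 2 ≠ 0 := by nlinarith [hx.1, hx.2]
        positivity
      apply div_pos _ hv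
      linarith
end

section
/- Fatou's theorem on critical points in immediate basins (polynomial case): let f be a polynomial with complex coefficients of degree d ≥ 2, and let z₀ ∈ ℂ be an attracting fixed point of f, i.e. f(z₀) = z₀ and |f'(z₀)| < 1. Let B = {z ∈ ℂ : f^{∘n}(z) → z₀ as n → ∞} be the basin of attraction of z₀, and let B₀ be the connected component of B containing z₀ (the immediate basin). Then B₀ contains a critical point of f, i.e. there exists c ∈ B₀ with f'(c) = 0. -/
open Metric Set Filter Polynomial
open scoped Topology

noncomputable section

variable {g : ℂ → ℂ} {Ω : Set ℂ}

lemma fatou_loc_inj (hg : ∀ x : ℂ, HasStrictDerivAt g (deriv g x) x)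
    {y : ℂ} (hy : deriv g y ≠ 0) :
    ∃ N : Set ℂ, IsOpen N ∧ y ∈ N ∧ Set.InjOn g N := by
  have hf := (hg y).hasStrictFDerivAt_equiv hy
  exact ⟨(hf.toOpenPartialHomeomorph g).source, (hf.toOpenPartialHomeomorph g).open_source,
    hf.mem_toOpenPartialHomeomorph_source, by
      have := (hf.toOpenPartialHomeomorph g).injOn
      rwa [hf.toOpenPartialHomeomorph_coe] at this⟩

lemma fatou_patch (hΩ : IsOpen Ω) (hg : ∀ x : ℂ, HasStrictDerivAt g (deriv g x) x)
    {y : ℂ} (hyΩ : y ∈ Ω) (hy : deriv g y ≠ 0) :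
    ∃ ε > 0, ∃ φ : ℂ → ℂ, ContinuousOn φ (ball (g y) ε) ∧ φ (g y) = y ∧
      ∀ z ∈ ball (g y) ε, φ z ∈ Ω ∧ g (φ z) = z := by
  have hf := (hg y).hasStrictFDerivAt_equiv hy
  set e := hf.toOpenPartialHomeomorph g with he
  have hco : (e : ℂ → ℂ) = g := hf.toOpenPartialHomeomorph_coe
  have hys : y ∈ e.source := hf.mem_toOpenPartialHomeomorph_source
  have hyt : g y ∈ e.target := by
    have := e.map_source hys; rwa [hco] at this
  have hsymm : ContinuousOn e.symm e.target := e.continuousOn_symm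
  have hsy : e.symm (g y) = y := by
    have := e.left_inv hys; rwa [hco] at this
  -- open set where the inverse lands in Ω ∩ e.source
  have hO : IsOpen {z ∈ e.target | e.symm z ∈ Ω} :=
    hsymm.isOpen_inter_preimage e.open_target hΩ
  have hyO : g y ∈ {z ∈ e.target | e.symm z ∈ Ω} := ⟨hyt, by rwa [hsy]⟩
  obtain ⟨ε, hε, hball⟩ := isOpen_iff.1 hO _ hyO
  refine ⟨ε, hε, e.symm, hsymm.mono fun z hz => (hball hz).1, hsy, fun z hz => ?_⟩
  obtain ⟨hzt, hzΩ⟩ := hball hz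
  refine ⟨hzΩ, ?_⟩
  have := e.right_inv hzt
  rwa [hco] at this

lemma fatou_unique (hΩ : IsOpen Ω) (hg : ∀ x : ℂ, HasStrictDerivAt g (deriv g x) x)
    (hg' : ∀ y ∈ Ω, deriv g y ≠ 0) {W : Set ℂ} (hWo : IsOpen W) (hW : IsPreconnected W)
    {h₁ h₂ : ℂ → ℂ} (hc₁ : ContinuousOn h₁ W) (hc₂ : ContinuousOn h₂ W)
    (hp₁ : ∀ z ∈ W, h₁ z ∈ Ω ∧ g (h₁ z) = z) (hp₂ : ∀ z ∈ W, h₂ z ∈ Ω ∧ g (h₂ z) = z)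
    {a : ℂ} (ha : a ∈ W) (hagree : h₁ a = h₂ a) : EqOn h₁ h₂ W := by
  set A := {z ∈ W | h₁ z = h₂ z} with hA
  -- A is open
  have hAopen : IsOpen A := by
    rw [isOpen_iff_mem_nhds]
    rintro z ⟨hzW, hz⟩
    obtain ⟨N, hNo, hNy, hNinj⟩ := fatou_loc_inj hg (hg' _ (hp₁ z hzW).1)
    have hc₁z : ContinuousAt h₁ z := hc₁.continuousAt (hWo.mem_nhds hzW)
    have hc₂z : ContinuousAt h₂ z := hc₂.continuousAt (hWo.mem_nhds hzW)
    have h₁N : ∀ᶠ w in 𝓝 z, h₁ w ∈ N := hc₁z (hNo.mem_nhds hNy)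
    have h₂N : ∀ᶠ w in 𝓝 z, h₂ w ∈ N := hc₂z (hNo.mem_nhds (hz ▸ hNy))
    filter_upwards [h₁N, h₂N, hWo.mem_nhds hzW] with w hw1 hw2 hwW
    exact ⟨hwW, hNinj hw1 hw2 (((hp₁ w hwW).2).trans ((hp₂ w hwW).2).symm)⟩
  -- complement is open in W
  have hBopen : IsOpen {z ∈ W | h₁ z ≠ h₂ z} := by
    rw [isOpen_iff_mem_nhds]
    rintro z ⟨hzW, hz⟩
    have : ContinuousOn (fun w => h₁ w - h₂ w) W := hc₁.sub hc₂
    have hcz : ContinuousAt (fun w => h₁ w - h₂ w) z := this.continuousAt (hWo.mem_nhds hzW)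
    have : ∀ᶠ w in 𝓝 z, h₁ w - h₂ w ≠ 0 := hcz.eventually_ne (sub_ne_zero.2 hz)
    filter_upwards [this, hWo.mem_nhds hzW] with w hw hwW
    exact ⟨hwW, sub_ne_zero.1 hw⟩
  intro z hzW
  by_contra hne
  obtain ⟨w, hwW, ⟨-, hw1⟩, -, hw2⟩ :=
    hW A {z ∈ W | h₁ z ≠ h₂ z} hAopen hBopen
      (fun w hw => by by_cases h : h₁ w = h₂ w
                      exacts [Or.inl ⟨hw, h⟩, Or.inr ⟨hw, h⟩])
      ⟨a, ha, ha, hagree⟩ ⟨z, hzW, hzW, hne⟩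
  exact hw2 hw1

lemma fatou_right_inv_deriv (hΩ : IsOpen Ω) (hg : ∀ x : ℂ, HasStrictDerivAt g (deriv g x) x)
    (hg' : ∀ y ∈ Ω, deriv g y ≠ 0) {V : Set ℂ} (hVo : IsOpen V) {H : ℂ → ℂ}
    (hc : ContinuousOn H V) (hp : ∀ z ∈ V, H z ∈ Ω ∧ g (H z) = z) {z' : ℂ} (hz' : z' ∈ V) :
    HasDerivAt H (deriv g (H z'))⁻¹ z' := by
  set y' := H z' with hy'
  have hy'Ω : y' ∈ Ω := (hp z' hz').1
  have hne : deriv g y' ≠ 0 := hg' _ hy'Ω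
  obtain ⟨N, hNo, hNy, hNinj⟩ := fatou_loc_inj hg hne
  have hgy' : g y' = z' := (hp z' hz').2
  have hcH : ContinuousAt H z' := hc.continuousAt (hVo.mem_nhds hz')
  have hcg : ContinuousAt g y' := (hg y').hasDerivAt.continuousAt
  -- H is a left inverse of g near y'
  have hgg : ∀ᶠ x in 𝓝 y', H (g x) = x := by
    have h1 : ∀ᶠ x in 𝓝 y', x ∈ N := hNo.mem_nhds hNy
    have h2 : ∀ᶠ x in 𝓝 y', g x ∈ V := by
      have : ∀ᶠ w in 𝓝 (g y'), w ∈ V := hVo.mem_nhds (hgy' ▸ hz')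
      exact hcg this
    have h3 : ∀ᶠ x in 𝓝 y', H (g x) ∈ N := by
      have hHg : ContinuousAt (fun x => H (g x)) y' := by
        have h4 : ContinuousAt H (g y') := by rwa [hgy']
        exact h4.comp hcg
      have : H (g y') ∈ N := by rwa [hgy']
      exact hHg (hNo.mem_nhds this)
    filter_upwards [h1, h2, h3] with x hx1 hx2 hx3
    exact hNinj hx3 hx1 (hp _ hx2).2
  have := (hg y').to_local_left_inverse hne hgg
  rw [hgy'] at this
  exact this.hasDerivAt

lemma fatou_glue (hΩ : IsOpen Ω) (hg : ∀ x : ℂ, HasStrictDerivAt g (deriv g x) x)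
    (hg' : ∀ y ∈ Ω, deriv g y ≠ 0) {z₀ : ℂ} {R : ℝ} (hR : 0 < R)
    (hex : ∀ t : ℝ, 0 < t → t < R → ∃ h : ℂ → ℂ, ContinuousOn h (ball z₀ t) ∧ h z₀ = z₀ ∧
      ∀ z ∈ ball z₀ t, h z ∈ Ω ∧ g (h z) = z) :
    ∃ h : ℂ → ℂ, ContinuousOn h (ball z₀ R) ∧ h z₀ = z₀ ∧
      ∀ z ∈ ball z₀ R, h z ∈ Ω ∧ g (h z) = z := by
  have hex' : ∀ t : ℝ, ∃ h : ℂ → ℂ, 0 < t → t < R → (ContinuousOn h (ball z₀ t) ∧ h z₀ = z₀ ∧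
      ∀ z ∈ ball z₀ t, h z ∈ Ω ∧ g (h z) = z) := by
    intro t
    by_cases h1 : 0 < t
    · by_cases h2 : t < R
      · obtain ⟨h, hh⟩ := hex t h1 h2; exact ⟨h, fun _ _ => hh⟩
      · exact ⟨id, fun _ h => absurd h h2⟩
    · exact ⟨id, fun h _ => absurd h h1⟩
  choose w hw using hex'
  set t : ℂ → ℝ := fun z => (dist z z₀ + R) / 2 with ht
  have htpos : ∀ z, 0 < t z := fun z => by
    have := dist_nonneg (x := z) (y := z₀); simp only [ht]; linarith
  have htlt : ∀ z ∈ ball z₀ R, t z < R := fun z hz => by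
    have := mem_ball.1 hz; simp only [ht]; linarith
  have htmem : ∀ z ∈ ball z₀ R, z ∈ ball z₀ (t z) := fun z hz => by
    have := mem_ball.1 hz
    simp only [mem_ball, ht]; linarith
  -- pairwise agreement
  have hpair : ∀ z ∈ ball z₀ R, ∀ z' ∈ ball z₀ R, ∀ u ∈ ball z₀ (min (t z) (t z')),
      w (t z) u = w (t z') u := by
    intro z hz z' hz' u hu
    obtain ⟨hc1, ha1, hp1⟩ := hw (t z) (htpos z) (htlt z hz)
    obtain ⟨hc2, ha2, hp2⟩ := hw (t z') (htpos z') (htlt z' hz')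
    have hmin : (0:ℝ) < min (t z) (t z') := lt_min (htpos z) (htpos z')
    have hsub1 : ball z₀ (min (t z) (t z')) ⊆ ball z₀ (t z) := ball_subset_ball (min_le_left _ _)
    have hsub2 : ball z₀ (min (t z) (t z')) ⊆ ball z₀ (t z') := ball_subset_ball (min_le_right _ _)
    exact fatou_unique hΩ hg hg' isOpen_ball (convex_ball z₀ _).isPreconnected
      (hc1.mono hsub1) (hc2.mono hsub2)
      (fun u hu => hp1 u (hsub1 hu)) (fun u hu => hp2 u (hsub2 hu))
      (mem_ball_self hmin) (ha1.trans ha2.symm) hu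
  refine ⟨fun z => w (t z) z, ?_, ?_, ?_⟩
  · apply continuousOn_of_forall_continuousAt
    intro z hz
    have hO : IsOpen (ball z₀ R ∩ ball z₀ (t z)) := isOpen_ball.inter isOpen_ball
    have hzO : z ∈ ball z₀ R ∩ ball z₀ (t z) := ⟨hz, htmem z hz⟩
    have hEq : ∀ᶠ z' in 𝓝 z, w (t z') z' = w (t z) z' := by
      filter_upwards [hO.mem_nhds hzO] with z' ⟨hz'R, hz'tz⟩
      exact hpair z' hz'R z hz z' (mem_ball.2 (lt_min (mem_ball.1 (htmem z' hz'R)) (mem_ball.1 hz'tz)))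
    have hca : ContinuousAt (w (t z)) z :=
      ((hw (t z) (htpos z) (htlt z hz)).1).continuousAt (isOpen_ball.mem_nhds (htmem z hz))
    exact hca.congr (hEq.mono fun z' h => h.symm)
  · have h0 : z₀ ∈ ball z₀ R := mem_ball_self hR
    exact (hw (t z₀) (htpos z₀) (htlt z₀ h0)).2.1
  · intro z hz
    exact (hw (t z) (htpos z) (htlt z hz)).2.2 z (htmem z hz)

lemma fatou_extend (hΩ : IsOpen Ω) (hg : ∀ x : ℂ, HasStrictDerivAt g (deriv g x) x)
    (hg' : ∀ y ∈ Ω, deriv g y ≠ 0) {K : Set ℂ} (hK : IsCompact K) (hKΩ : K ⊆ Ω)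
    {z₀ : ℂ} {r : ℝ} (hpre : ∀ y ∈ Ω, g y ∈ closedBall z₀ r → y ∈ K)
    {R : ℝ} (hR0 : 0 < R) (hRr : R ≤ r)
    {H : ℂ → ℂ} (hc : ContinuousOn H (ball z₀ R)) (ha : H z₀ = z₀)
    (hp : ∀ z ∈ ball z₀ R, H z ∈ Ω ∧ g (H z) = z) :
    ∃ R' > R, ∃ h : ℂ → ℂ, ContinuousOn h (ball z₀ R') ∧ h z₀ = z₀ ∧
      ∀ z ∈ ball z₀ R', h z ∈ Ω ∧ g (h z) = z := by
  -- Step 1: boundary patches agreeing with H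
  have key : ∀ w : ℂ, ∃ ε : ℝ, ∃ φ : ℂ → ℂ, w ∈ sphere z₀ R →
      (0 < ε ∧ ContinuousOn φ (ball w ε) ∧ (∀ z ∈ ball w ε, φ z ∈ Ω ∧ g (φ z) = z) ∧
        EqOn H φ (ball z₀ R ∩ ball w ε)) := by
    intro w
    by_cases hw : w ∈ sphere z₀ R
    swap
    · exact ⟨0, id, fun h => absurd h hw⟩
    have hwR : dist w z₀ = R := mem_sphere.1 hw
    -- the radial sequence
    set c : ℕ → ℝ := fun k => 1 - 1 / (k + 1) with hcdef
    set zs : ℕ → ℂ := fun k => z₀ + (c k : ℝ) * (w - z₀) with hzs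
    have hc01 : ∀ k, 0 ≤ c k ∧ c k < 1 := by
      intro k
      have h1 : (0:ℝ) < 1 / (k + 1) := by positivity
      have h2 : 1 / ((k:ℝ) + 1) ≤ 1 := by
        rw [div_le_one (by positivity)]; linarith
      constructor <;> simp only [hcdef] <;> linarith
    have hzsball : ∀ k, zs k ∈ ball z₀ R := by
      intro k
      have : dist (zs k) z₀ = c k * R := by
        have hwR' : ‖w - z₀‖ = R := by rw [← dist_eq_norm]; exact hwR
        simp only [hzs, dist_eq_norm, add_sub_cancel_left, norm_mul, Complex.norm_real,
          Real.norm_eq_abs, abs_of_nonneg (hc01 k).1, hwR']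
      rw [mem_ball, this]
      calc c k * R < 1 * R := by
            apply mul_lt_mul_of_pos_right (hc01 k).2 hR0
        _ = R := one_mul R
    have hzstend : Tendsto zs atTop (𝓝 w) := by
      have h1 : Tendsto c atTop (𝓝 1) := by
        have := tendsto_one_div_add_atTop_nhds_zero_nat (𝕜 := ℝ)
        have h2 := this.const_sub 1
        simpa [hcdef] using h2
      have h2 : Tendsto (fun k => ((c k : ℝ) : ℂ)) atTop (𝓝 1) := by
        have := (Complex.continuous_ofReal.tendsto 1).comp h1
        simpa [Function.comp_def] using this
      have h3 : Tendsto (fun k => z₀ + ((c k : ℝ) : ℂ) * (w - z₀)) atTop (𝓝 (z₀ + 1 * (w - z₀))) :=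
        ((h2.mul (tendsto_const_nhds (x := w - z₀))).const_add z₀)
      simpa [hzs] using h3
    -- cluster point in K
    have hHK : ∀ k, H (zs k) ∈ K := by
      intro k
      refine hpre _ (hp _ (hzsball k)).1 ?_
      rw [(hp _ (hzsball k)).2]
      exact closedBall_subset_closedBall hRr (ball_subset_closedBall (hzsball k))
    obtain ⟨y, hyK, σ, hσ, hytend⟩ := hK.tendsto_subseq hHK
    have hyΩ : y ∈ Ω := hKΩ hyK
    have hgy : g y = w := by
      have h1 : Tendsto (fun j => g (H (zs (σ j)))) atTop (𝓝 (g y)) :=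
        ((hg y).hasDerivAt.continuousAt.tendsto).comp hytend
      have h2 : (fun j => g (H (zs (σ j)))) = fun j => zs (σ j) := by
        funext j; exact (hp _ (hzsball (σ j))).2
      rw [h2] at h1
      have h3 : Tendsto (fun j => zs (σ j)) atTop (𝓝 w) :=
        hzstend.comp hσ.tendsto_atTop
      exact tendsto_nhds_unique h1 h3
    obtain ⟨ε, hε, φ, hφc, hφw, hφp⟩ := fatou_patch hΩ hg hyΩ (hg' y hyΩ)
    rw [hgy] at hφc hφw hφp
    refine ⟨ε, φ, fun _ => ⟨hε, hφc, hφp, ?_⟩⟩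
    -- agreement of H and φ on the lens
    obtain ⟨N, hNo, hNy, hNinj⟩ := fatou_loc_inj hg (hg' y hyΩ)
    -- find an anchor point
    have hev1 : ∀ᶠ j in atTop, H (zs (σ j)) ∈ N := hytend.eventually (hNo.mem_nhds hNy)
    have hφca : ContinuousAt φ w := hφc.continuousAt (isOpen_ball.mem_nhds (mem_ball_self hε))
    have hev2 : ∀ᶠ j in atTop, φ (zs (σ j)) ∈ N := by
      have : Tendsto (fun j => φ (zs (σ j))) atTop (𝓝 y) := by
        have := hφca.tendsto.comp (hzstend.comp hσ.tendsto_atTop)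
        rwa [hφw] at this
      exact this.eventually (hNo.mem_nhds hNy)
    have hev3 : ∀ᶠ j in atTop, zs (σ j) ∈ ball w ε :=
      (hzstend.comp hσ.tendsto_atTop).eventually (isOpen_ball.mem_nhds (mem_ball_self hε))
    obtain ⟨j, hj1, hj2a, hj2b⟩ := (hev1.and (hev2.and hev3)).exists
    set u := zs (σ j) with hu
    have huball : u ∈ ball z₀ R := hzsball (σ j)
    have hanchor : H u = φ u := by
      apply hNinj hj1 hj2a
      rw [(hp _ huball).2, (hφp _ hj2b).2]
    exact fatou_unique hΩ hg hg' (isOpen_ball.inter isOpen_ball)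
      ((convex_ball z₀ R).inter (convex_ball w ε)).isPreconnected
      (hc.mono inter_subset_left) (hφc.mono inter_subset_right)
      (fun z hz => hp z hz.1) (fun z hz => hφp z hz.2)
      ⟨huball, hj2b⟩ hanchor
  choose ε φ hh using key
  -- Step 2: patches agree pairwise
  have hPP : ∀ w ∈ sphere z₀ R, ∀ w' ∈ sphere z₀ R,
      EqOn (φ w) (φ w') (ball w (ε w) ∩ ball w' (ε w')) := by
    intro w hw w' hw'
    obtain ⟨hε, hφc, hφp, hHφ⟩ := hh w hw
    obtain ⟨hε', hφc', hφp', hHφ'⟩ := hh w' hw'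
    rcases eq_or_ne w w' with rfl | hne
    · exact fun u _ => rfl
    rcases Set.eq_empty_or_nonempty (ball w (ε w) ∩ ball w' (ε w')) with hemp | ⟨u, hu⟩
    · rw [hemp]; exact fun u hu => absurd hu (notMem_empty u)
    have hdist : dist w w' < ε w + ε w' := by
      calc dist w w' ≤ dist w u + dist u w' := dist_triangle _ _ _
        _ < ε w + ε w' := add_lt_add (by rw [dist_comm]; exact mem_ball.1 hu.1) (mem_ball.1 hu.2)
    have hsum : 0 < ε w + ε w' := by linarith
    set a := ε w / (ε w + ε w') with hadef
    have ha0 : 0 < a := div_pos hε hsum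
    have ha1 : a < 1 := (div_lt_one hsum).2 (by linarith)
    set q := (1 - a) • w + a • w' with hqdef
    have hqw : q - w = a • (w' - w) := by
      rw [hqdef]; module
    have hqw' : q - w' = (1 - a) • (w - w') := by
      rw [hqdef]; module
    have hq1 : q ∈ ball w (ε w) := by
      rw [mem_ball, dist_eq_norm, hqw, norm_smul, Real.norm_eq_abs, abs_of_pos ha0]
      calc a * ‖w' - w‖ < a * (ε w + ε w') := by
            apply mul_lt_mul_of_pos_left _ ha0
            rw [← dist_eq_norm, dist_comm]; exact hdist
        _ = ε w := by rw [hadef]; field_simp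
    have hq2 : q ∈ ball w' (ε w') := by
      rw [mem_ball, dist_eq_norm, hqw', norm_smul, Real.norm_eq_abs, abs_of_pos (by linarith)]
      calc (1 - a) * ‖w - w'‖ < (1 - a) * (ε w + ε w') := by
            apply mul_lt_mul_of_pos_left _ (by linarith)
            rw [← dist_eq_norm]; exact hdist
        _ = ε w' := by rw [hadef]; field_simp; ring
    have hq3 : q ∈ ball z₀ R := by
      have hscb := strictConvex_closedBall ℝ z₀ R
      have h5 := hscb (sphere_subset_closedBall hw) (sphere_subset_closedBall hw') hne
        (by linarith : (0:ℝ) < 1 - a) ha0 (by ring)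
      rw [interior_closedBall z₀ hR0.ne'] at h5
      exact h5
    have hanchor : φ w q = φ w' q := by
      rw [← hHφ ⟨hq3, hq1⟩, hHφ' ⟨hq3, hq2⟩]
    exact fatou_unique hΩ hg hg' (isOpen_ball.inter isOpen_ball)
      ((convex_ball w (ε w)).inter (convex_ball w' (ε w'))).isPreconnected
      (hφc.mono inter_subset_left) (hφc'.mono inter_subset_right)
      (fun z hz => hφp z hz.1) (fun z hz => hφp' z hz.2)
      ⟨hq1, hq2⟩ hanchor
  -- Step 3: a slightly larger ball is covered
  set U := ball z₀ R ∪ ⋃ (w : ℂ) (_ : w ∈ sphere z₀ R), ball w (ε w) with hUdef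
  have hUopen : IsOpen U :=
    isOpen_ball.union (isOpen_iUnion fun w => isOpen_iUnion fun _ => isOpen_ball)
  have hcover : closedBall z₀ R ⊆ U := by
    intro z hz
    rcases lt_or_eq_of_le (mem_closedBall.1 hz) with h | h
    · exact Or.inl (mem_ball.2 h)
    · refine Or.inr (mem_iUnion.2 ⟨z, mem_iUnion.2 ⟨mem_sphere.2 h, ?_⟩⟩)
      exact mem_ball_self (hh z (mem_sphere.2 h)).1
  obtain ⟨δ, hδ, hthick⟩ :=
    (isCompact_closedBall z₀ R).exists_thickening_subset_open hUopen hcover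
  have hsub : ball z₀ (R + δ) ⊆ U := by
    refine subset_trans ?_ hthick
    rw [thickening_closedBall hδ hR0.le z₀]
    exact ball_subset_ball (by linarith)
  -- Step 4: glue the patches
  classical
  set Φ : ℂ → ℂ := fun z => if z ∈ ball z₀ R then H z else
    if hq : ∃ w, w ∈ sphere z₀ R ∧ z ∈ ball w (ε w) then φ hq.choose z else z₀ with hΦdef
  have hΦH : EqOn Φ H (ball z₀ R) := fun z hz => by simp only [hΦdef, if_pos hz]
  have hΦφ : ∀ w ∈ sphere z₀ R, EqOn Φ (φ w) (ball w (ε w)) := by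
    intro w hw z hz
    by_cases hzR : z ∈ ball z₀ R
    · have h1 := (hh w hw).2.2.2 ⟨hzR, hz⟩
      simp only [hΦdef, if_pos hzR]; exact h1
    · have hq : ∃ w', w' ∈ sphere z₀ R ∧ z ∈ ball w' (ε w') := ⟨w, hw, hz⟩
      simp only [hΦdef, if_neg hzR, dif_pos hq]
      exact hPP _ hq.choose_spec.1 w hw ⟨hq.choose_spec.2, hz⟩
  refine ⟨R + δ, by linarith, Φ, ?_, ?_, ?_⟩
  · apply continuousOn_of_forall_continuousAt
    intro z hz
    rcases hsub hz with hzR | hziU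
    · exact (hc.continuousAt (isOpen_ball.mem_nhds hzR)).congr
        ((isOpen_ball.eventually_mem hzR).mono fun z' hz' => (hΦH hz').symm)
    · obtain ⟨w, hw, hzw⟩ := mem_iUnion₂.1 hziU
      exact (((hh w hw).2.1).continuousAt (isOpen_ball.mem_nhds hzw)).congr
        ((isOpen_ball.eventually_mem hzw).mono fun z' hz' => (hΦφ w hw hz').symm)
  · rw [hΦH (mem_ball_self hR0)]; exact ha
  · intro z hz
    rcases hsub hz with hzR | hziU
    · rw [hΦH hzR]; exact hp z hzR
    · obtain ⟨w, hw, hzw⟩ := mem_iUnion₂.1 hziU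
      rw [hΦφ w hw hzw]; exact (hh w hw).2.2.1 z hzw

lemma fatou_lift (hΩ : IsOpen Ω) (hg : ∀ x : ℂ, HasStrictDerivAt g (deriv g x) x)
    (hg' : ∀ y ∈ Ω, deriv g y ≠ 0) {K : Set ℂ} (hK : IsCompact K) (hKΩ : K ⊆ Ω)
    {z₀ : ℂ} {r : ℝ} (hr : 0 < r) (hz₀ : z₀ ∈ Ω) (hgz₀ : g z₀ = z₀)
    (hpre : ∀ y ∈ Ω, g y ∈ closedBall z₀ r → y ∈ K) :
    ∃ h : ℂ → ℂ, ContinuousOn h (ball z₀ r) ∧ h z₀ = z₀ ∧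
      ∀ z ∈ ball z₀ r, h z ∈ Ω ∧ g (h z) = z := by
  obtain ⟨ε₀, hε₀, φ₀, hφc, hφ0, hφp⟩ := fatou_patch hΩ hg hz₀ (hg' z₀ hz₀)
  rw [hgz₀] at hφc hφ0 hφp
  set S := {t : ℝ | 0 < t ∧ t ≤ r ∧ ∃ h : ℂ → ℂ, ContinuousOn h (ball z₀ t) ∧ h z₀ = z₀ ∧
    ∀ z ∈ ball z₀ t, h z ∈ Ω ∧ g (h z) = z} with hSdef
  have hmemS : min ε₀ r ∈ S := by
    refine ⟨lt_min hε₀ hr, min_le_right _ _, φ₀, hφc.mono (ball_subset_ball (min_le_left _ _)),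
      hφ0, fun z hz => hφp z (ball_subset_ball (min_le_left _ _) hz)⟩
  have hbdd : BddAbove S := ⟨r, fun t ht => ht.2.1⟩
  set T := sSup S with hTdef
  have hT0 : 0 < T := lt_of_lt_of_le (lt_min hε₀ hr) (le_csSup hbdd hmemS)
  have hTr : T ≤ r := csSup_le ⟨_, hmemS⟩ fun t ht => ht.2.1
  -- glue up to T
  obtain ⟨H, hHc, hHa, hHp⟩ : ∃ h : ℂ → ℂ, ContinuousOn h (ball z₀ T) ∧ h z₀ = z₀ ∧
      ∀ z ∈ ball z₀ T, h z ∈ Ω ∧ g (h z) = z := by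
    apply fatou_glue hΩ hg hg' hT0
    intro t ht0 htT
    obtain ⟨s, hsS, hts⟩ := exists_lt_of_lt_csSup ⟨_, hmemS⟩ htT
    obtain ⟨-, -, h, hc, ha, hp⟩ := hsS
    exact ⟨h, hc.mono (ball_subset_ball hts.le), ha,
      fun z hz => hp z (ball_subset_ball hts.le hz)⟩
  rcases eq_or_lt_of_le hTr with hTr' | hTr'
  · exact ⟨H, hTr' ▸ hHc, hHa, hTr' ▸ hHp⟩
  · exfalso
    obtain ⟨R', hR', h, hc, ha, hp⟩ := fatou_extend hΩ hg hg' hK hKΩ hpre hT0 hTr hHc hHa hHp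
    have hmem' : min R' r ∈ S := by
      refine ⟨lt_min (hT0.trans hR') hr, min_le_right _ _, h,
        hc.mono (ball_subset_ball (min_le_left _ _)), ha,
        fun z hz => hp z (ball_subset_ball (min_le_left _ _) hz)⟩
    have : min R' r ≤ T := le_csSup hbdd hmem'
    rcases lt_or_ge R' r with h' | h'
    · rw [min_eq_left h'.le] at this; exact absurd this (not_le.2 hR')
    · rw [min_eq_right h'] at this; exact absurd this (not_le.2 hTr')

end

/-- Fatou's theorem on critical points in immediate basins, polynomial case: if `f` is a
complex polynomial of degree at least `2` and `z₀` is an attracting fixed point of `f`,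
then the connected component containing `z₀` of the basin
`B = {z : f^[n](z) → z₀}` (the immediate basin) contains a critical point of `f`. -/
theorem fatou_critical_point_in_immediate_basin (f : Polynomial ℂ)
    (hd : 2 ≤ f.natDegree) (z₀ : ℂ)
    (hfix : f.eval z₀ = z₀)
    (hattr : ‖f.derivative.eval z₀‖ < 1) :
    ∃ c ∈ connectedComponentIn
        {z : ℂ | Filter.Tendsto (fun n => (fun w => f.eval w)^[n] z)
          Filter.atTop (nhds z₀)} z₀,
      f.derivative.eval c = 0 := by
  classical
  set G : ℂ → ℂ := fun w => f.eval w with hGdef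
  set B := {z : ℂ | Tendsto (fun n => G^[n] z) atTop (𝓝 z₀)} with hBdef
  set lam := f.derivative.eval z₀ with hlam
  have hGz₀ : G z₀ = z₀ := hfix
  have hGcont : Continuous G := f.continuous
  have hGstrict : ∀ x, HasStrictDerivAt G (deriv G x) x := by
    intro x
    have h1 := f.hasStrictDerivAt x
    have h2 : deriv G x = f.derivative.eval x := Polynomial.deriv (p := f)
    rw [h2]; exact h1
  -- the contraction constant
  set k := (1 + ‖lam‖) / 2 with hkdef
  have hk0 : 0 ≤ k := by positivity
  have hkl : ‖lam‖ < k := by rw [hkdef]; linarith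
  have hk1 : k < 1 := by rw [hkdef]; linarith
  -- a contraction ball
  have hev : ∀ᶠ z in 𝓝 z₀, ‖G z - z₀‖ ≤ k * ‖z - z₀‖ := by
    have hder : HasDerivAt G lam z₀ := by
      have := f.hasDerivAt z₀; rw [hlam]; exact this
    have hlil := hasDerivAt_iff_isLittleO.1 hder
    have hb := (Asymptotics.isLittleO_iff.1 hlil)
      (show (0:ℝ) < k - ‖lam‖ by linarith)
    filter_upwards [hb] with z hz
    rw [hGz₀] at hz
    have h3 : ‖(z - z₀) • lam‖ = ‖z - z₀‖ * ‖lam‖ := by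
      rw [smul_eq_mul, norm_mul]
    have h4 : ‖G z - z₀‖ ≤ ‖G z - z₀ - (z - z₀) • lam‖ + ‖(z - z₀) • lam‖ := by
      have := norm_add_le (G z - z₀ - (z - z₀) • lam) ((z - z₀) • lam)
      simpa using this
    have h5 : ‖z - z₀‖ ≥ 0 := norm_nonneg _
    nlinarith [hz, h3, h4]
  obtain ⟨r, hr0, hrball⟩ : ∃ r > 0, ∀ z, dist z z₀ ≤ r → ‖G z - z₀‖ ≤ k * ‖z - z₀‖ := by
    obtain ⟨s, hs, hss⟩ := Metric.eventually_nhds_iff.1 hev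
    exact ⟨s / 2, by linarith, fun z hz => hss (lt_of_le_of_lt hz (by linarith))⟩
  have hmaps : ∀ z ∈ closedBall z₀ r, G z ∈ closedBall z₀ r := by
    intro z hz
    have h1 := hrball z (mem_closedBall.1 hz)
    have h2 : ‖z - z₀‖ ≤ r := by rw [← dist_eq_norm]; exact mem_closedBall.1 hz
    rw [mem_closedBall, dist_eq_norm]
    nlinarith [norm_nonneg (z - z₀)]
  have hiter : ∀ z ∈ closedBall z₀ r, ∀ n, G^[n] z ∈ closedBall z₀ r ∧
      ‖G^[n] z - z₀‖ ≤ k ^ n * ‖z - z₀‖ := by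
    intro z hz n
    induction n with
    | zero => simpa using hz
    | succ n ih =>
      rw [Function.iterate_succ_apply']
      refine ⟨hmaps _ ih.1, ?_⟩
      have h1 := hrball _ (mem_closedBall.1 ih.1)
      have h2 := ih.2
      rw [pow_succ]
      nlinarith [norm_nonneg (G^[n] z - z₀), pow_nonneg hk0 n]
  have hcB_B : closedBall z₀ r ⊆ B := by
    intro z hz
    rw [hBdef, mem_setOf_eq, tendsto_sub_nhds_zero_iff.symm]
    apply squeeze_zero_norm (fun n => (hiter z hz n).2)
    simpa using (tendsto_pow_atTop_nhds_zero_of_lt_one hk0 hk1).mul_const ‖z - z₀‖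
  have hz₀B : z₀ ∈ B := hcB_B (mem_closedBall_self hr0.le)
  -- invariance
  have hforward : ∀ z ∈ B, G z ∈ B := by
    intro z hz
    have h1 : Tendsto (fun n => G^[n + 1] z) atTop (𝓝 z₀) := (tendsto_add_atTop_iff_nat 1).2 hz
    exact h1
  have hbackward : ∀ z, G z ∈ B → z ∈ B := by
    intro z hz
    rw [hBdef, mem_setOf_eq, ← tendsto_add_atTop_iff_nat 1]
    exact hz
  have hbackn : ∀ n, ∀ z, G^[n] z ∈ B → z ∈ B := by
    intro n
    induction n with
    | zero => simpa using fun z h => h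
    | succ n ih =>
      intro z hz
      rw [Function.iterate_succ_apply] at hz
      exact hbackward z (ih _ hz)
  -- openness
  have hBopen : IsOpen B := by
    rw [isOpen_iff_mem_nhds]
    intro z hz
    have h1 : ∀ᶠ n in atTop, G^[n] z ∈ ball z₀ r := hz (isOpen_ball.mem_nhds (mem_ball_self hr0))
    obtain ⟨n, hn⟩ := h1.exists
    have hcont : Continuous (G^[n]) := hGcont.iterate n
    have h2 : (G^[n]) ⁻¹' (ball z₀ r) ∈ 𝓝 z :=
      hcont.continuousAt.preimage_mem_nhds (isOpen_ball.mem_nhds hn)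
    filter_upwards [h2] with z' hz'
    exact hbackn n z' (hcB_B (ball_subset_closedBall hz'))
  -- boundedness
  have hdivX : 0 < f.divX.degree := by
    have h1 : f.divX.natDegree = f.natDegree - 1 := natDegree_divX_eq_natDegree_tsub_one
    have h2 : 0 < f.divX.natDegree := by omega
    exact natDegree_pos_iff_degree_pos.1 h2
  have ht : Tendsto (fun z : ℂ => ‖Polynomial.eval z f.divX‖) (Bornology.cobounded ℂ) atTop :=
    f.divX.tendsto_norm_atTop hdivX tendsto_norm_cobounded_atTop
  obtain ⟨s, -, hs⟩ := (Metric.hasBasis_cobounded_compl_closedBall (0:ℂ)).eventually_iff.1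
    (ht.eventually_ge_atTop 3)
  set M₀ := max (max (s + 1) ‖f.coeff 0‖) 1 with hM₀def
  have hM₀1 : 1 ≤ M₀ := le_max_right _ _
  have hgrow : ∀ z : ℂ, M₀ ≤ ‖z‖ → 2 * ‖z‖ ≤ ‖G z‖ := by
    intro z hz
    have hzs : s < ‖z‖ := by
      have : s + 1 ≤ M₀ := le_trans (le_max_left _ _) (le_max_left _ _)
      linarith
    have h3 : 3 ≤ ‖Polynomial.eval z f.divX‖ := by
      apply hs
      simp only [mem_compl_iff, mem_closedBall, dist_zero_right, not_le]
      exact hzs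
    have heq : Polynomial.eval z f = z * Polynomial.eval z f.divX + f.coeff 0 := by
      have h0 := congrArg (Polynomial.eval z) f.X_mul_divX_add
      simp only [Polynomial.eval_add, Polynomial.eval_mul, Polynomial.eval_X,
        Polynomial.eval_C] at h0
      exact h0.symm
    have h4 : ‖z * Polynomial.eval z f.divX‖ ≤ ‖Polynomial.eval z f‖ + ‖f.coeff 0‖ := by
      rw [heq]
      have := norm_add_le (z * Polynomial.eval z f.divX + f.coeff 0) (-(f.coeff 0))
      simpa using this
    have h5 : ‖z * Polynomial.eval z f.divX‖ = ‖z‖ * ‖Polynomial.eval z f.divX‖ := norm_mul _ _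
    have h6 : ‖f.coeff 0‖ ≤ ‖z‖ := le_trans (le_trans (le_max_right _ _) (le_max_left _ _)) hz
    have h7 : (0:ℝ) ≤ ‖z‖ := norm_nonneg _
    have : ‖G z‖ = ‖Polynomial.eval z f‖ := rfl
    rw [this]
    nlinarith
  have hBbounded : ∀ z ∈ B, ‖z‖ < M₀ := by
    intro z hzB
    by_contra hge
    push_neg at hge
    have hlow : ∀ n, M₀ ≤ ‖G^[n] z‖ ∧ 2 ^ n * ‖z‖ ≤ ‖G^[n] z‖ := by
      intro n
      induction n with
      | zero => simpa using hge
      | succ n ih =>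
        rw [Function.iterate_succ_apply']
        have h1 := hgrow _ ih.1
        constructor
        · nlinarith [ih.1, hM₀1]
        · rw [pow_succ]
          nlinarith [ih.2, norm_nonneg (G^[n] z), norm_nonneg z]
    have hb : ∀ᶠ n in atTop, dist (G^[n] z) z₀ < 1 := hzB (Metric.ball_mem_nhds z₀ one_pos)
    have h1z : 1 ≤ ‖z‖ := le_trans hM₀1 hge
    have hub : ∀ᶠ (n : ℕ) in atTop, ‖z₀‖ + 1 < 2 ^ n * ‖z‖ := by
      have h2 : Tendsto (fun n : ℕ => (2:ℝ) ^ n) atTop atTop :=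
        tendsto_pow_atTop_atTop_of_one_lt one_lt_two
      filter_upwards [h2.eventually_gt_atTop (‖z₀‖ + 1)] with n hn
      calc ‖z₀‖ + 1 < 2 ^ n := hn
        _ ≤ 2 ^ n * ‖z‖ := le_mul_of_one_le_right (by positivity) h1z
    obtain ⟨n, hn1, hn2⟩ := (hb.and hub).exists
    have h3 : ‖G^[n] z‖ ≤ ‖z₀‖ + 1 := by
      have := norm_add_le (G^[n] z - z₀) z₀
      rw [dist_eq_norm] at hn1
      simp only [sub_add_cancel] at this
      linarith
    linarith [(hlow n).2]
  -- the immediate basin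
  set Om := connectedComponentIn B z₀ with hOmdef
  have hOmopen : IsOpen Om := hBopen.connectedComponentIn
  have hz₀Om : z₀ ∈ Om := mem_connectedComponentIn hz₀B
  have hOmB : Om ⊆ B := connectedComponentIn_subset _ _
  have hclosure : ∀ y, y ∈ closure Om → y ∈ B → y ∈ Om := by
    intro y hyc hyB
    have hopen' : IsOpen (connectedComponentIn B y) := hBopen.connectedComponentIn
    obtain ⟨w, hw1, hw2⟩ := mem_closure_iff.1 hyc _ hopen' (mem_connectedComponentIn hyB)
    have h1 := connectedComponentIn_eq hw1
    have h2 := connectedComponentIn_eq hw2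
    have h3 := mem_connectedComponentIn hyB
    rw [h1, ← h2] at h3
    exact h3
  have hGOm : MapsTo G Om Om := by
    have himg : IsPreconnected (G '' Om) :=
      isPreconnected_connectedComponentIn.image _ hGcont.continuousOn
    have hsub : G '' Om ⊆ B := by rintro _ ⟨w, hw, rfl⟩; exact hforward w (hOmB hw)
    have hz₀im : z₀ ∈ G '' Om := ⟨z₀, hz₀Om, hGz₀⟩
    have h4 := himg.subset_connectedComponentIn hz₀im hsub
    exact fun w hw => h4 ⟨w, hw, rfl⟩
  -- suppose there is no critical point in the immediate basin
  by_contra hno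
  push_neg at hno
  have hno' : ∀ c ∈ Om, f.derivative.eval c ≠ 0 := hno
  have hlam0 : lam ≠ 0 := hno' z₀ hz₀Om
  -- derivatives of the iterates
  have hstrictn : ∀ n : ℕ, ∀ x : ℂ,
      HasStrictDerivAt (G^[n]) (∏ j ∈ Finset.range n, f.derivative.eval (G^[j] x)) x := by
    intro n
    induction n with
    | zero => intro x; simpa using hasStrictDerivAt_id x
    | succ n ih =>
      intro x
      have h1 : HasStrictDerivAt G (f.derivative.eval (G^[n] x)) (G^[n] x) :=
        f.hasStrictDerivAt (G^[n] x)
      have h2 := h1.comp x (ih x)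
      have h3 : G^[n + 1] = G ∘ G^[n] := Function.iterate_succ' G n
      rw [h3, Finset.prod_range_succ, mul_comm]
      exact h2
  have hderivn : ∀ (n : ℕ) (x : ℂ),
      deriv (G^[n]) x = ∏ j ∈ Finset.range n, f.derivative.eval (G^[j] x) :=
    fun n x => (hstrictn n x).hasDerivAt.deriv
  have hstrictn' : ∀ (n : ℕ) (x : ℂ), HasStrictDerivAt (G^[n]) (deriv (G^[n]) x) x := by
    intro n x; rw [hderivn]; exact hstrictn n x
  have hGiterOm : ∀ n : ℕ, MapsTo (G^[n]) Om Om := fun n => hGOm.iterate n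
  have hderivn_ne : ∀ n : ℕ, ∀ y ∈ Om, deriv (G^[n]) y ≠ 0 := by
    intro n y hy
    rw [hderivn]
    exact Finset.prod_ne_zero_iff.2 fun j _ => hno' _ (hGiterOm j hy)
  -- the compact properness witnesses
  have hKn : ∀ n : ℕ, IsCompact ((G^[n]) ⁻¹' (closedBall z₀ r) ∩ Om) := by
    intro n
    have heq' : (G^[n]) ⁻¹' (closedBall z₀ r) ∩ Om
        = (G^[n]) ⁻¹' (closedBall z₀ r) ∩ closure Om := by
      apply Subset.antisymm (inter_subset_inter_right _ subset_closure)
      rintro y ⟨h1, h2⟩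
      exact ⟨h1, hclosure y h2 (hbackn n y (hcB_B h1))⟩
    have hclosed : IsClosed ((G^[n]) ⁻¹' (closedBall z₀ r) ∩ Om) := by
      rw [heq']
      exact ((Metric.isClosed_closedBall (x := z₀) (ε := r)).preimage (hGcont.iterate n)).inter
        isClosed_closure
    apply (isCompact_closedBall (0:ℂ) M₀).of_isClosed_subset hclosed
    rintro y ⟨-, hy⟩
    exact mem_closedBall_zero_iff.2 (hBbounded y (hOmB hy)).le
  -- apply the lifting lemma for each n and use the Schwarz lemma
  set R₂ := M₀ + ‖z₀‖ + 1 with hR₂def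
  have hR₂0 : 0 < R₂ := by have := norm_nonneg z₀; linarith
  have hOmball : Om ⊆ ball z₀ R₂ := by
    intro y hy
    rw [mem_ball, dist_eq_norm]
    calc ‖y - z₀‖ ≤ ‖y‖ + ‖z₀‖ := norm_sub_le _ _
      _ < R₂ := by have := hBbounded y (hOmB hy); rw [hR₂def]; linarith
  have hbound : ∀ n : ℕ, ((‖lam‖) ^ n)⁻¹ ≤ R₂ / r := by
    intro n
    obtain ⟨h, hc, ha, hp⟩ := fatou_lift hOmopen (hstrictn' n) (hderivn_ne n) (hKn n)
      inter_subset_right hr0 hz₀Om (Function.iterate_fixed hGz₀ n)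
      (fun y hy hball => ⟨mem_preimage.2 hball, hy⟩)
    have hder : ∀ z ∈ ball z₀ r, HasDerivAt h (deriv (G^[n]) (h z))⁻¹ z := fun z hz =>
      fatou_right_inv_deriv hOmopen (hstrictn' n) (hderivn_ne n) isOpen_ball hc hp hz
    have hdiff : DifferentiableOn ℂ h (ball z₀ r) := fun z hz =>
      ((hder z hz).differentiableAt).differentiableWithinAt
    have hmapball : MapsTo h (ball z₀ r) (ball (h z₀) R₂) := by
      rw [ha]; exact fun z hz => hOmball (hp z hz).1
    have hSch := Complex.norm_deriv_le_div_of_mapsTo_ball hdiff (hmapball.mono_right ball_subset_closedBall) hr0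
    have h1 : deriv h z₀ = (deriv (G^[n]) (h z₀))⁻¹ := (hder z₀ (mem_ball_self hr0)).deriv
    have h2 : deriv (G^[n]) z₀ = lam ^ n := by
      rw [hderivn]
      rw [Finset.prod_congr rfl fun j _ => by rw [Function.iterate_fixed hGz₀ j]]
      simp [hlam]
    rw [h1, ha, h2] at hSch
    calc ((‖lam‖) ^ n)⁻¹ = ‖(lam ^ n)⁻¹‖ := by
          rw [norm_inv, norm_pow]
      _ ≤ R₂ / r := hSch
  -- contradiction
  have habs0 : 0 < ‖lam‖ := norm_pos_iff.2 hlam0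
  have hlow2 : ∀ n : ℕ, r / R₂ ≤ (‖lam‖) ^ n := by
    intro n
    have h1 := hbound n
    have h2 : (0:ℝ) < (‖lam‖) ^ n := pow_pos habs0 n
    rw [div_le_iff₀ hR₂0]
    rw [le_div_iff₀ hr0] at h1
    have h3 := mul_le_mul_of_nonneg_left h1 h2.le
    rw [← mul_assoc, mul_inv_cancel₀ h2.ne', one_mul] at h3
    exact h3
  have hlim : Tendsto (fun n : ℕ => (‖lam‖) ^ n) atTop (𝓝 0) :=
    tendsto_pow_atTop_nhds_zero_of_lt_one (norm_nonneg _) hattr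
  have hfinal : r / R₂ ≤ 0 := ge_of_tendsto' hlim hlow2
  have : 0 < r / R₂ := div_pos hr0 hR₂0
  linarith
end
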